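/- Let u : {x>0} → ℝ² with G(x) := ∫_ℝ [½(|∂_y u|² − |∂_x u|²) + W(u(x,y))] dy ≡ C₁ constant. Assume (i) ∫_{0<x<R} (½|∇u|² + W(u)) dz ≤ σR + C for all R > 0, (ii) for every x > 0 the slice y ↦ u(x,y) has 1D energy ∫_ℝ (½|∂_y u|² + W(u)) dy ≥ σ, and (iii) ∫_{x>0} |∂_x u|² dz ≤ C. Then C₁ = σ. -/

import Mathlib

open MeasureTheory intervalIntegral

/-- If `G(x) = e₁(x) − ½‖∂_x u(x,·)‖² ≡ C₁` where `e₁(x)` is the 1D energy of the slice,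
the total energy on `{0 < x < R}` is at most `σR + C`, each slice energy is at least `σ`,
and the horizontal deformation `∫ |∂_x u|²` is at most `C`, then `C₁ = σ`. -/
theorem stmt8 (e₁ px2 : ℝ → ℝ) (C₁ σ C : ℝ) (hσ : 0 < σ) (hC : 0 ≤ C)
    (hpx2 : ∀ x, 0 ≤ px2 x)
    (hInt : ∀ R : ℝ, 0 < R → IntervalIntegrable e₁ volume 0 R ∧
      IntervalIntegrable px2 volume 0 R)
    (hG : ∀ x : ℝ, 0 < x → e₁ x - px2 x / 2 = C₁)
    (htot : ∀ R : ℝ, 0 < R → (∫ x in (0:ℝ)..R, (e₁ x + px2 x / 2)) ≤ σ * R + C)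
    (hslice : ∀ x : ℝ, 0 < x → σ ≤ e₁ x)
    (hpx : ∀ R : ℝ, 0 < R → (∫ x in (0:ℝ)..R, px2 x) ≤ C) :
    C₁ = σ := by
  -- Step 1: for every R > 0, σ * R ≤ C₁ * R + C / 2
  have h1 : ∀ R : ℝ, 0 < R → σ * R ≤ C₁ * R + C / 2 := by
    intro R hR
    have hIe : IntegrableOn e₁ (Set.Ioc 0 R) volume := (hInt R hR).1.1
    have hIp : IntegrableOn px2 (Set.Ioc 0 R) volume := (hInt R hR).2.1
    have hmono : (∫ x in Set.Ioc (0:ℝ) R, σ) ≤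
        ∫ x in Set.Ioc (0:ℝ) R, (C₁ + px2 x / 2) := by
      apply setIntegral_mono_on
      · exact integrableOn_const measure_Ioc_lt_top.ne
      · exact (integrableOn_const measure_Ioc_lt_top.ne).add (hIp.div_const 2)
      · exact measurableSet_Ioc
      · intro x hx
        have := hG x hx.1
        have h2 := hslice x hx.1
        linarith
    have hconst : (∫ x in Set.Ioc (0:ℝ) R, σ) = σ * R := by
      simp [Real.volume_Ioc, hR.le, mul_comm]
    have hsplit : (∫ x in Set.Ioc (0:ℝ) R, (C₁ + px2 x / 2)) =
        C₁ * R + (∫ x in Set.Ioc (0:ℝ) R, px2 x) / 2 := by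
      rw [integral_add (show IntegrableOn (fun _ : ℝ => C₁) (Set.Ioc 0 R) volume from integrableOn_const measure_Ioc_lt_top.ne) (hIp.div_const 2),
        MeasureTheory.integral_div]
      simp [Real.volume_Ioc, hR.le, mul_comm]
    have hpxR : (∫ x in Set.Ioc (0:ℝ) R, px2 x) ≤ C := by
      have := hpx R hR
      rwa [intervalIntegral.integral_of_le hR.le] at this
    calc σ * R = ∫ x in Set.Ioc (0:ℝ) R, σ := hconst.symm
      _ ≤ ∫ x in Set.Ioc (0:ℝ) R, (C₁ + px2 x / 2) := hmono
      _ = C₁ * R + (∫ x in Set.Ioc (0:ℝ) R, px2 x) / 2 := hsplit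
      _ ≤ C₁ * R + C / 2 := by linarith
  -- Step 2: for every R > 0, C₁ * R ≤ σ * R + C
  have h2 : ∀ R : ℝ, 0 < R → C₁ * R ≤ σ * R + C := by
    intro R hR
    have hIe : IntegrableOn e₁ (Set.Ioc 0 R) volume := (hInt R hR).1.1
    have hIp : IntegrableOn px2 (Set.Ioc 0 R) volume := (hInt R hR).2.1
    have hmono : (∫ x in Set.Ioc (0:ℝ) R, C₁) ≤
        ∫ x in Set.Ioc (0:ℝ) R, (e₁ x + px2 x / 2) := by
      apply setIntegral_mono_on
      · exact integrableOn_const measure_Ioc_lt_top.ne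
      · exact hIe.add (hIp.div_const 2)
      · exact measurableSet_Ioc
      · intro x hx
        have := hG x hx.1
        have := hpx2 x
        linarith
    have hconst : (∫ x in Set.Ioc (0:ℝ) R, C₁) = C₁ * R := by
      simp [Real.volume_Ioc, hR.le, mul_comm]
    have htotR : (∫ x in Set.Ioc (0:ℝ) R, (e₁ x + px2 x / 2)) ≤ σ * R + C := by
      have := htot R hR
      rwa [intervalIntegral.integral_of_le hR.le] at this
    linarith [hmono, hconst, htotR]
  -- Conclude
  by_contra hne
  rcases lt_or_gt_of_ne hne with h | h
  · -- C₁ < σ, use h1 with large R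
    set d := σ - C₁ with hd
    have hd0 : 0 < d := by simp [hd]; linarith
    have hR : 0 < (C / 2 + 1) / d := by positivity
    have := h1 _ hR
    have : d * ((C / 2 + 1) / d) ≤ C / 2 := by nlinarith [this]
    rw [mul_div_cancel₀ _ hd0.ne'] at this
    linarith
  · -- σ < C₁, use h2 with large R
    set d := C₁ - σ with hd
    have hd0 : 0 < d := by simp [hd]; linarith
    have hR : 0 < (C + 1) / d := by positivity
    have := h2 _ hR
    have : d * ((C + 1) / d) ≤ C := by nlinarith [this]
    rw [mul_div_cancel₀ _ hd0.ne'] at this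
    linarith
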